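/- Let β, ρ, μ, d, τ be real numbers and let S, I, R : J → ℝ be differentiable on an open interval J, with t₀ ∈ J, and satisfy Ṡ = −βSI, İ = βSI − (ρ+μ)I, Ṙ = ρI − dR on J. Then for every d' ∈ ℝ and every c ∈ ℝ, the function R'(t) = e^{−d'(t−t₀)} c + ∫_{t₀}^{t} e^{−d'(t−s)} ρ I(s) ds satisfies Ṙ' = ρI − d'R' on J, so that (S, I, R') is a solution of the same model with the parameter d replaced by d' and with the output y(t) = ρ I(t) + τ identical to that of (S, I, R). (Hence R is unobservable and d is structurally unidentifiable from this output.) -/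

import Mathlib

open intervalIntegral

/-- In the SIR model 15 (Roda et al.) with output `y = ρI + τ`, the state `R` is
unobservable and the parameter `d` unidentifiable: if `(S, I, R)` solves
`Ṡ = −βSI`, `İ = βSI − (ρ+μ)I`, `Ṙ = ρI − dR` on the open interval `(a, b)` containing `t₀`,
then for every `d'` and `c` the function
`R'(t) = e^{−d'(t−t₀)} c + ∫_{t₀}^{t} e^{−d'(t−s)} ρ I(s) ds`
satisfies `Ṙ' = ρI − d'R'` on `(a, b)`, so `(S, I, R')` solves the same model with `d`
replaced by `d'` and with identical output `y = ρI + τ`. -/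
theorem sir15_R_unobservable_d_unidentifiable (β ρ μ d τ a b t₀ : ℝ)
    (ht₀ : t₀ ∈ Set.Ioo a b) (S I R : ℝ → ℝ)
    (hS : ∀ t ∈ Set.Ioo a b, HasDerivAt S (-β * S t * I t) t)
    (hI : ∀ t ∈ Set.Ioo a b, HasDerivAt I (β * S t * I t - (ρ + μ) * I t) t)
    (hR : ∀ t ∈ Set.Ioo a b, HasDerivAt R (ρ * I t - d * R t) t) :
    ∀ d' c : ℝ, ∀ t ∈ Set.Ioo a b,
      HasDerivAt
        (fun u => Real.exp (-d' * (u - t₀)) * c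
          + ∫ s in t₀..u, Real.exp (-d' * (u - s)) * (ρ * I s))
        (ρ * I t - d' * (Real.exp (-d' * (t - t₀)) * c
          + ∫ s in t₀..t, Real.exp (-d' * (t - s)) * (ρ * I s))) t ∧
      HasDerivAt S (-β * S t * I t) t ∧
      HasDerivAt I (β * S t * I t - (ρ + μ) * I t) t ∧
      ρ * I t + τ = ρ * I t + τ := by
  intro d' c t ht
  refine ⟨?_, hS t ht, hI t ht, rfl⟩
  -- continuity of I on (a,b)
  have hIcont : ContinuousOn I (Set.Ioo a b) := fun u hu =>
    (hI u hu).continuousAt.continuousWithinAt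
  set f : ℝ → ℝ := fun s => Real.exp (d' * s) * (ρ * I s) with hf
  have hfcont : ContinuousOn f (Set.Ioo a b) :=
    (Real.continuous_exp.comp (continuous_const.mul continuous_id)).continuousOn.mul
      (continuousOn_const.mul hIcont)
  -- the function rewrites as exp(-d'*u) * (exp(d'*t₀)*c + ∫ f)
  have hfun : (fun u => Real.exp (-d' * (u - t₀)) * c
      + ∫ s in t₀..u, Real.exp (-d' * (u - s)) * (ρ * I s))
      = fun u => Real.exp (-d' * u) * (Real.exp (d' * t₀) * c + ∫ s in t₀..u, f s) := by
    funext u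
    have h1 : (fun s => Real.exp (-d' * (u - s)) * (ρ * I s))
        = fun s => Real.exp (-d' * u) * f s := by
      funext s
      rw [hf]
      rw [show Real.exp (-d' * u) * (Real.exp (d' * s) * (ρ * I s))
          = Real.exp (-d' * u) * Real.exp (d' * s) * (ρ * I s) by ring,
        ← Real.exp_add]
      ring_nf
    rw [h1, intervalIntegral.integral_const_mul,
      show Real.exp (-d' * (u - t₀)) = Real.exp (-d' * u) * Real.exp (d' * t₀) from by
        rw [← Real.exp_add]; ring_nf]
    ring
  rw [hfun]
  -- FTC part
  have hsub : Set.uIcc t₀ t ⊆ Set.Ioo a b :=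
    Set.ordConnected_Ioo.uIcc_subset ht₀ ht
  have hint : IntervalIntegrable f MeasureTheory.volume t₀ t :=
    (hfcont.mono hsub).intervalIntegrable
  have hF : HasDerivAt (fun u => ∫ s in t₀..u, f s) (f t) t := by
    refine intervalIntegral.integral_hasDerivAt_right hint ?_ ?_
    · exact (hfcont.stronglyMeasurableAtFilter isOpen_Ioo t ht)
    · exact (hfcont t ht).continuousAt (isOpen_Ioo.mem_nhds ht)
  have hexp : HasDerivAt (fun u => Real.exp (-d' * u)) (-d' * Real.exp (-d' * t)) t := by
    have h0 : HasDerivAt (fun u : ℝ => -d' * u) (-d') t := by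
      simpa using (hasDerivAt_id t).const_mul (-d')
    simpa [mul_comm] using h0.exp
  have hG : HasDerivAt (fun u => Real.exp (d' * t₀) * c + ∫ s in t₀..u, f s) (f t) t :=
    (hF.const_add _)
  have := hexp.mul hG
  convert this using 1
  case e'_4 => rfl
  case e'_5 => rfl
  case e'_8 => rfl
  have hee : Real.exp (-d' * t) * Real.exp (d' * t) = 1 := by
    rw [← Real.exp_add]; ring_nf; exact Real.exp_zero
  have hsplit : Real.exp (-d' * (t - t₀)) * c
      = Real.exp (-d' * t) * (Real.exp (d' * t₀) * c) := by
    rw [show Real.exp (-d' * t) * (Real.exp (d' * t₀) * c)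
        = Real.exp (-d' * t) * Real.exp (d' * t₀) * c by ring, ← Real.exp_add]
    ring_nf
  have hintsplit : (∫ s in t₀..t, Real.exp (-d' * (t - s)) * (ρ * I s))
      = Real.exp (-d' * t) * ∫ s in t₀..t, f s := by
    rw [← intervalIntegral.integral_const_mul]
    congr 1
    funext s
    rw [hf, show Real.exp (-d' * t) * (Real.exp (d' * s) * (ρ * I s))
        = Real.exp (-d' * t) * Real.exp (d' * s) * (ρ * I s) by ring, ← Real.exp_add]
    ring_nf
  rw [hsplit, hintsplit, hf]
  linear_combination (-(ρ * I t)) * hee
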